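/- Let (X_i)_{i≥1} be a sequence of i.i.d. ℝ^m-valued random vectors and let h : ℝ^d × ℝ^m → ℝ be a measurable function such that (i) almost surely, the map θ ∈ ℝ^d ↦ h(θ, X_1) is continuous, and (ii) for every M > 0, E(sup_{|θ|≤M} |h(θ, X_1)|) < ∞. Then almost surely, the functions θ ∈ ℝ^d ↦ (1/n) Σ_{i=1}^n h(θ, X_i) converge locally uniformly on ℝ^d, as n → ∞, to the continuous function θ ∈ ℝ^d ↦ E(h(θ, X_1)). -/

import Mathlib

open MeasureTheory ProbabilityTheory Filter Real Topology

noncomputable section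

/-- Euclidean norm on `ℝ^k`. -/
def nrm {k : ℕ} (x : Fin k → ℝ) : ℝ := Real.sqrt (∑ i, x i ^ 2)

/-- Euclidean inner (dot) product on `ℝ^k`. -/
def dot {k : ℕ} (x y : Fin k → ℝ) : ℝ := ∑ i, x i * y i

/-- The standard Gaussian measure on `ℝ^d`. -/
def stdGaussian (d : ℕ) : Measure (Fin d → ℝ) :=
  MeasureTheory.Measure.pi fun _ => ProbabilityTheory.gaussianReal 0 1

/-- `v^f(θ) = E(f²(G) e^{-θ·G + |θ|²/2})`. -/
def vF {d : ℕ} (f : (Fin d → ℝ) → ℝ) (θ : Fin d → ℝ) : ℝ :=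
  ∫ x, f x ^ 2 * Real.exp (-(dot θ x) + nrm θ ^ 2 / 2) ∂ stdGaussian d

/-- `v^{f,A}(ϑ) = v^f(Aϑ)`. -/
def vFA {d d' : ℕ} (A : Matrix (Fin d) (Fin d') ℝ) (f : (Fin d → ℝ) → ℝ)
    (ϑ : Fin d' → ℝ) : ℝ :=
  vF f (A.mulVec ϑ)

/-- The sample average approximation `v_n^{f,A}`. -/
def vnFA {d d' : ℕ} {Ω : Type*} (Gs : ℕ → Ω → Fin d → ℝ)
    (A : Matrix (Fin d) (Fin d') ℝ) (f : (Fin d → ℝ) → ℝ) (n : ℕ) (ω : Ω)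
    (ϑ : Fin d' → ℝ) : ℝ :=
  (1 / n : ℝ) * ∑ i ∈ Finset.range n,
    f (Gs i ω) ^ 2 * Real.exp (-(dot (A.mulVec ϑ) (Gs i ω)) + nrm (A.mulVec ϑ) ^ 2 / 2)

/-- The importance sampling estimator `M_n(θ, g)`. -/
def Mn {d : ℕ} {Ω : Type*} (Gs : ℕ → Ω → Fin d → ℝ) (n : ℕ) (θ : Fin d → ℝ)
    (g : (Fin d → ℝ) → ℝ) (ω : Ω) : ℝ :=
  (1 / n : ℝ) * ∑ i ∈ Finset.range n,
    g (Gs i ω + θ) * Real.exp (-(dot θ (Gs i ω)) - nrm θ ^ 2 / 2)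

/-- The Hölder class `ℋ_α`. -/
def MemH {d : ℕ} (α : ℝ) (g : (Fin d → ℝ) → ℝ) : Prop :=
  ∃ β ∈ Set.Ico (0 : ℝ) 2, ∃ lam > (0 : ℝ),
    (∀ x, |g x| ≤ lam * Real.exp (nrm x ^ β)) ∧
    ∀ x y, |g x - g y| ≤ lam * Real.exp (max (nrm x ^ β) (nrm y ^ β)) * nrm (x - y) ^ α

/-- `𝒜`-monotonicity of a function on `ℝ^d` for a vector `𝒜 ∈ ℝ^d`. -/
def AMonotonic {d : ℕ} (𝒜 : Fin d → ℝ) (h : (Fin d → ℝ) → ℝ) : Prop :=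
  (∀ x, Monotone fun ϑ : ℝ => h (x + ϑ • 𝒜)) ∨ (∀ x, Antitone fun ϑ : ℝ => h (x + ϑ • 𝒜))

/-- The class `𝒱_𝒜`. -/
def MemV {d : ℕ} (𝒜 : Fin d → ℝ) (h : (Fin d → ℝ) → ℝ) : Prop :=
  ∃ g₁ g₂ : (Fin d → ℝ) → ℝ, h = g₁ + g₂ ∧ AMonotonic 𝒜 g₁ ∧ AMonotonic 𝒜 g₂ ∧
    ∃ lam > (0 : ℝ), ∃ β ∈ Set.Ico (0 : ℝ) 2,
      ∀ x, |g₁ x| ≤ lam * Real.exp (nrm x ^ β) ∧ |g₂ x| ≤ lam * Real.exp (nrm x ^ β)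

lemma geom_partial_le (ε : ENNReal) (k : ℕ) :
    ∑ i ∈ Finset.range k, ε * 2⁻¹ ^ (i + 1) ≤ ε := by
  have h1 : (1 : ENNReal) - 2⁻¹ = 2⁻¹ := by
    rw [ENNReal.sub_eq_of_eq_add (by simp)]
    rw [← ENNReal.inv_two_add_inv_two]
  calc ∑ i ∈ Finset.range k, ε * 2⁻¹ ^ (i + 1)
      ≤ ∑' i : ℕ, ε * 2⁻¹ ^ (i + 1) := ENNReal.sum_le_tsum _
    _ = ε * (2⁻¹ * ∑' i : ℕ, 2⁻¹ ^ i) := by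
        have : ∀ i : ℕ, ε * 2⁻¹ ^ (i + 1) = (ε * 2⁻¹) * 2⁻¹ ^ i := by
          intro i; ring
        simp_rw [this]
        rw [ENNReal.tsum_mul_left, mul_assoc]
    _ = ε := by
        rw [ENNReal.tsum_geometric, h1, inv_inv]
        rw [show ((2:ENNReal)⁻¹ * 2) = 1 by
          rw [ENNReal.inv_mul_cancel (by norm_num) (by norm_num)]]
        rw [mul_one]

lemma cap_step {α : Type*} [MeasurableSpace α] (μ : Measure α) [IsFiniteMeasure μ]
    (f : (ℕ → ℕ) → α) (A : Set (ℕ → ℕ)) (k : ℕ) {δ : ENNReal} (hδ : 0 < δ) :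
    ∃ j : ℕ, μ (f '' A) ≤ μ (f '' (A ∩ {y | y k ≤ j})) + δ := by
  by_contra hcon
  push_neg at hcon
  have hmono : Monotone (fun j : ℕ => A ∩ {y | y k ≤ j}) := by
    intro a b hab y hy
    exact ⟨hy.1, le_trans hy.2 hab⟩
  have hU' : (⋃ j : ℕ, (A ∩ {y | y k ≤ j})) = A := by
    ext y
    simp only [Set.mem_iUnion, Set.mem_inter_iff, Set.mem_setOf_eq]
    constructor
    · rintro ⟨j, hj, -⟩; exact hj
    · intro hy; exact ⟨y k, hy, le_refl _⟩
  have hU : (⋃ j : ℕ, f '' (A ∩ {y | y k ≤ j})) = f '' A := by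
    rw [← Set.image_iUnion, hU']
  have htend : Tendsto (fun j : ℕ => μ (f '' (A ∩ {y | y k ≤ j}))) atTop
      (𝓝 (μ (f '' A))) := by
    have := tendsto_measure_iUnion_atTop (μ := μ) (fun a b hab => Set.image_mono (f := f) (hmono hab))
    rwa [hU] at this
  have htend2 : Tendsto (fun j : ℕ => μ (f '' (A ∩ {y | y k ≤ j})) + δ) atTop
      (𝓝 (μ (f '' A) + δ)) := htend.add tendsto_const_nhds
  have hle : μ (f '' A) + δ ≤ μ (f '' A) + 0 := by
    rw [add_zero]
    exact le_of_tendsto' htend2 (fun j => (hcon j).le)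
  have : δ ≤ 0 := (ENNReal.add_le_add_iff_left (measure_ne_top μ _)).mp hle
  exact absurd this (by simpa using hδ.ne')

theorem analyticSet_null_of_compact_null {α : Type*} [MetricSpace α] [MeasurableSpace α]
    [OpensMeasurableSpace α] (μ : Measure α) [IsFiniteMeasure μ] {S : Set α}
    (hS : MeasureTheory.AnalyticSet S) (h0 : ∀ F, F ⊆ S → IsCompact F → μ F = 0) :
    μ S = 0 := by
  rw [MeasureTheory.AnalyticSet] at hS
  rcases hS with rfl | ⟨f, hf, rfl⟩
  · simp
  refine le_antisymm ?_ (by simp)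
  refine ENNReal.le_of_forall_pos_le_add (fun ε hε _ => ?_)
  rw [zero_add]
  set e : ℕ → ENNReal := fun i => (ε : ENNReal) * 2⁻¹ ^ (i + 1) with he_def
  have he : ∀ i, 0 < e i := by
    intro i
    exact ENNReal.mul_pos (by exact_mod_cast hε.ne') (by simp)
  set Aset : (ℕ → ℕ) → ℕ → Set (ℕ → ℕ) := fun v k => {y | ∀ i, i < k → y i ≤ v i} with hAset
  let pick : ℕ → (ℕ → ℕ) → ℕ := fun k v => Classical.choose (cap_step μ f (Aset v k) k (he k))
  have pick_spec : ∀ k v, μ (f '' Aset v k) ≤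
      μ (f '' (Aset v k ∩ {y | y k ≤ pick k v})) + e k :=
    fun k v => Classical.choose_spec (cap_step μ f (Aset v k) k (he k))
  let p : ℕ → (ℕ → ℕ) := fun k =>
    Nat.rec (motive := fun _ => ℕ → ℕ) (fun _ => 0)
      (fun k pk => Function.update pk k (pick k pk)) k
  have hpsucc : ∀ k, p (k + 1) = Function.update (p k) k (pick k (p k)) := fun k => rfl
  set n : ℕ → ℕ := fun k => p (k + 1) k with hn
  have hnp : ∀ k, n k = pick k (p k) := by
    intro k
    show p (k + 1) k = pick k (p k)
    rw [hpsucc k, Function.update_self]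
  have hcoh : ∀ k i, i < k → p k i = n i := by
    intro k
    induction k with
    | zero => intro i hi; omega
    | succ k ih =>
      intro i hi
      rcases Nat.lt_or_ge i k with hik | hik
      · rw [hpsucc k, Function.update_of_ne (by omega), ih i hik]
      · have : i = k := by omega
        subst this
        rfl
  set A : ℕ → Set (ℕ → ℕ) := fun k => Aset (p k) k with hA
  have hAmem : ∀ k y, y ∈ A k ↔ ∀ i, i < k → y i ≤ n i := by
    intro k y
    constructor
    · intro hy i hi; rw [← hcoh k i hi]; exact hy i hi
    · intro hy i hi; rw [hcoh k i hi]; exact hy i hi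
  have hAsucc : ∀ k, A (k + 1) = A k ∩ {y | y k ≤ n k} := by
    intro k
    ext y
    rw [hAmem (k+1) y]
    simp only [Set.mem_inter_iff, Set.mem_setOf_eq, hAmem k y]
    constructor
    · intro hy
      exact ⟨fun i hi => hy i (by omega), hy k (by omega)⟩
    · rintro ⟨h1, h2⟩ i hi
      rcases Nat.lt_or_ge i k with hik | hik
      · exact h1 i hik
      · have : i = k := by omega
        subst this; exact h2
  have hInv : ∀ k, μ (Set.range f) ≤ μ (f '' A k) + ∑ i ∈ Finset.range k, e i := by
    intro k
    induction k with
    | zero =>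
      have : A 0 = Set.univ := by
        ext y; simp [hAmem 0 y]
      simp [this]
    | succ k ih =>
      have step := pick_spec k (p k)
      have : Aset (p k) k ∩ {y | y k ≤ pick k (p k)} = A (k + 1) := by
        rw [hAsucc k, ← hnp k]
      rw [this] at step
      calc μ (Set.range f) ≤ μ (f '' A k) + ∑ i ∈ Finset.range k, e i := ih
        _ ≤ (μ (f '' A (k+1)) + e k) + ∑ i ∈ Finset.range k, e i := by
            exact add_le_add step le_rfl
        _ = μ (f '' A (k+1)) + ∑ i ∈ Finset.range (k+1), e i := by
            rw [Finset.sum_range_succ]; ring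
  have hInv' : ∀ k, μ (Set.range f) ≤ μ (closure (f '' A k)) + ε := by
    intro k
    calc μ (Set.range f) ≤ μ (f '' A k) + ∑ i ∈ Finset.range k, e i := hInv k
      _ ≤ μ (closure (f '' A k)) + ε :=
          add_le_add (measure_mono subset_closure) (geom_partial_le _ _)
  -- the compact core
  set K₀ : Set (ℕ → ℕ) := {y | ∀ i, y i ≤ n i} with hK₀
  have hK₀c : IsCompact K₀ := by
    have : K₀ = Set.pi Set.univ (fun i => Set.Iic (n i)) := by
      ext y; simp [Set.mem_pi, hK₀, Set.mem_Iic, Pi.le_def]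
    rw [this]
    exact isCompact_univ_pi (fun i => (Set.finite_Iic (n i)).isCompact)
  have hanti : Antitone (fun k => closure (f '' A k)) := by
    apply antitone_nat_of_succ_le
    intro k
    apply closure_mono
    apply Set.image_mono
    rw [hAsucc k]
    exact Set.inter_subset_left
  have htendI : Tendsto (fun k => μ (closure (f '' A k))) atTop
      (𝓝 (μ (⋂ k, closure (f '' A k)))) := by
    exact tendsto_measure_iInter_atTop
      (fun k => isClosed_closure.measurableSet.nullMeasurableSet) hanti
      ⟨0, measure_ne_top μ _⟩
  have hIsub : (⋂ k, closure (f '' A k)) ⊆ f '' K₀ := by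
    intro x hx
    have hex : ∀ k : ℕ, ∃ y, y ∈ A k ∧ dist x (f y) < 1 / (k + 1) := by
      intro k
      have hxk : x ∈ closure (f '' A k) := Set.mem_iInter.mp hx k
      rw [Metric.mem_closure_iff] at hxk
      obtain ⟨z, hz, hdz⟩ := hxk (1 / (k + 1)) (by positivity)
      obtain ⟨y, hy, rfl⟩ := hz
      exact ⟨y, hy, hdz⟩
    choose Y hYA hYd using hex
    set n' : ℕ → ℕ := fun i => max (n i) (Finset.sup (Finset.range (i + 1)) (fun k => Y k i))
      with hn'
    have hYK : ∀ k, Y k ∈ {y : ℕ → ℕ | ∀ i, y i ≤ n' i} := by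
      intro k i
      rcases Nat.lt_or_ge i k with hik | hik
      · exact le_trans ((hAmem k (Y k)).mp (hYA k) i hik) (le_max_left _ _)
      · refine le_trans ?_ (le_max_right _ _)
        exact Finset.le_sup (f := fun k => Y k i) (Finset.mem_range.mpr (Nat.lt_succ_of_le hik))
    have hK'c : IsCompact {y : ℕ → ℕ | ∀ i, y i ≤ n' i} := by
      have : {y : ℕ → ℕ | ∀ i, y i ≤ n' i} = Set.pi Set.univ (fun i => Set.Iic (n' i)) := by
        ext y; simp [Set.mem_pi, Set.mem_Iic, Pi.le_def]
      rw [this]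
      exact isCompact_univ_pi (fun i => (Set.finite_Iic (n' i)).isCompact)
    obtain ⟨y, hy, φ, hφ, hconv⟩ := hK'c.tendsto_subseq hYK
    refine ⟨y, ?_, ?_⟩
    · -- y ∈ K₀
      intro i
      have hcoord : Tendsto (fun k => Y (φ k) i) atTop (𝓝 (y i)) :=
        ((continuous_apply i).tendsto y).comp hconv
      have hev : ∀ᶠ k in atTop, Y (φ k) i ∈ Set.Iic (n i) := by
        filter_upwards [eventually_ge_atTop (i + 1)] with k hk
        have hkφ : k ≤ φ k := hφ.le_apply
        have : i < φ k := by omega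
        exact (hAmem (φ k) (Y (φ k))).mp (hYA (φ k)) i this
      exact isClosed_Iic.mem_of_tendsto hcoord hev
    · -- f y = x
      have h1 : Tendsto (fun k => f (Y (φ k))) atTop (𝓝 (f y)) :=
        (hf.tendsto y).comp hconv
      have h2 : Tendsto (fun k => f (Y (φ k))) atTop (𝓝 x) := by
        rw [tendsto_iff_dist_tendsto_zero]
        apply squeeze_zero (fun k => dist_nonneg)
          (fun k => le_of_lt (by rw [dist_comm]; exact hYd (φ k)))
        have hle : ∀ k : ℕ, (1 : ℝ) / (φ k + 1) ≤ 1 / (k + 1) := by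
          intro k
          apply one_div_le_one_div_of_le (by positivity)
          have hkφ : k ≤ φ k := hφ.le_apply
          push_cast
          have : (k : ℝ) ≤ φ k := by exact_mod_cast hkφ
          linarith
        apply squeeze_zero (fun k => by positivity) hle
        exact tendsto_one_div_add_atTop_nhds_zero_nat
      exact tendsto_nhds_unique h1 h2
  have hK0img : μ (f '' K₀) = 0 :=
    h0 _ (Set.image_subset_range f K₀) (hK₀c.image hf)
  have : μ (Set.range f) ≤ μ (⋂ k, closure (f '' A k)) + ε :=
    ge_of_tendsto' (htendI.add tendsto_const_nhds) hInv'
  calc μ (Set.range f) ≤ μ (⋂ k, closure (f '' A k)) + ε := this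
    _ ≤ μ (f '' K₀) + ε := add_le_add (measure_mono hIsub) le_rfl
    _ = ε := by rw [hK0img, zero_add]

abbrev Kball (d R : ℕ) : Set (Fin d → ℝ) := Metric.closedBall 0 R

instance KballCompact (d R : ℕ) : CompactSpace (Kball d R) :=
  isCompact_iff_compactSpace.mp (isCompact_closedBall _ _)

instance KballPolish (d R : ℕ) : PolishSpace (Kball d R) :=
  IsClosed.polishSpace Metric.isClosed_closedBall

noncomputable instance CKMeas (d R : ℕ) : MeasurableSpace C(Kball d R, ℝ) := borel _
instance CKBorel (d R : ℕ) : BorelSpace C(Kball d R, ℝ) := ⟨rfl⟩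

lemma interp_exists (d R : ℕ) :
    ∃ (T : ℕ → Finset (Fin d → ℝ)) (G : (j : ℕ) → (T j) → C(Kball d R, ℝ)),
      ∀ u : (Fin d → ℝ) → ℝ, (hu : Continuous u) →
        Tendsto (fun j => ∑ t : (T j), u t.1 • G j t) atTop
          (𝓝 ⟨fun θ : Kball d R => u θ.1, hu.comp continuous_subtype_val⟩) := by
  classical
  -- nets
  have hnet : ∀ j : ℕ, ∃ s : Finset (Fin d → ℝ), ↑s ⊆ Kball d R ∧
      ∀ θ ∈ Kball d R, ∃ t ∈ s, dist θ t < 1 / (j + 1) := by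
    intro j
    obtain ⟨s, hsub, hfin, hcover⟩ :=
      (isCompact_closedBall (0 : Fin d → ℝ) R).finite_cover_balls
        (e := 1 / (j + 1)) (by positivity)
    refine ⟨hfin.toFinset, by simpa using hsub, fun θ hθ => ?_⟩
    obtain ⟨t, ht, hdist⟩ := Set.mem_iUnion₂.mp (hcover hθ)
    exact ⟨t, hfin.mem_toFinset.mpr ht, Metric.mem_ball.mp hdist⟩
  choose T hTsub hTcover using hnet
  -- weights
  set ψ : ℕ → (Fin d → ℝ) → (Fin d → ℝ) → ℝ :=
    fun j t θ => max (1 / (j + 1) - dist θ t) 0 with hψ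
  have hψcont : ∀ j t, Continuous (ψ j t) := by
    intro j t
    exact (continuous_const.sub (continuous_id.dist continuous_const)).max continuous_const
  have hψnn : ∀ j t θ, 0 ≤ ψ j t θ := fun j t θ => le_max_right _ _
  set D : ℕ → (Fin d → ℝ) → ℝ := fun j θ => ∑ t ∈ T j, ψ j t θ with hD
  have hDcont : ∀ j, Continuous (D j) := fun j => continuous_finset_sum _ (fun t _ => hψcont j t)
  have hDpos : ∀ j, ∀ θ ∈ Kball d R, 0 < D j θ := by
    intro j θ hθ
    obtain ⟨t, ht, hdist⟩ := hTcover j θ hθ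
    refine Finset.sum_pos' (fun t' _ => hψnn j t' θ) ⟨t, ht, ?_⟩
    have : 0 < 1 / (j + 1 : ℝ) - dist θ t := by linarith
    simp only [hψ]
    exact lt_max_of_lt_left this
  set G : (j : ℕ) → (T j) → C(Kball d R, ℝ) := fun j t =>
    ⟨fun θ => ψ j t.1 θ.1 / D j θ.1,
      ((hψcont j t.1).comp continuous_subtype_val).div
        ((hDcont j).comp continuous_subtype_val)
        (fun θ => (hDpos j θ.1 θ.2).ne')⟩ with hG
  refine ⟨T, G, ?_⟩
  intro u hu
  rw [Metric.tendsto_atTop]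
  intro ε hε
  have hUC : UniformContinuousOn u (Metric.closedBall 0 R) :=
    (isCompact_closedBall _ _).uniformContinuousOn_of_continuous hu.continuousOn
  rw [Metric.uniformContinuousOn_iff_le] at hUC
  obtain ⟨δ, hδpos, hδ⟩ := hUC (ε / 2) (by positivity)
  obtain ⟨J, hJ⟩ := exists_nat_one_div_lt hδpos
  refine ⟨J, fun j hj => ?_⟩
  have hrj : 1 / (j + 1 : ℝ) ≤ δ := by
    have h1 : 1 / (j + 1 : ℝ) ≤ 1 / (J + 1 : ℝ) := by
      apply one_div_le_one_div_of_le (by positivity)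
      have : (J : ℝ) ≤ j := Nat.cast_le.mpr hj
      linarith
    exact le_trans h1 (le_of_lt hJ)
  have key : dist (∑ t : (T j), u t.1 • G j t)
      (⟨fun θ : Kball d R => u θ.1, hu.comp continuous_subtype_val⟩ : C(Kball d R, ℝ)) ≤ ε / 2 := by
    rw [ContinuousMap.dist_le (by positivity)]
    intro θ
    have hev : (∑ t : (T j), u t.1 • G j t) θ
        = ∑ t ∈ T j, u t * (ψ j t θ.1 / D j θ.1) := by
      rw [ContinuousMap.coe_sum, Finset.sum_apply]
      rw [← Finset.sum_coe_sort (T j) (fun t => u t * (ψ j t θ.1 / D j θ.1))]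
      congr 1
    have hsum1 : ∑ t ∈ T j, ψ j t θ.1 / D j θ.1 = 1 := by
      rw [← Finset.sum_div]
      exact div_self (hDpos j θ.1 θ.2).ne'
    have hwnn : ∀ t, 0 ≤ ψ j t θ.1 / D j θ.1 :=
      fun t => div_nonneg (hψnn j t θ.1) (hDpos j θ.1 θ.2).le
    have happly : (⟨fun θ : Kball d R => u θ.1, hu.comp continuous_subtype_val⟩
        : C(Kball d R, ℝ)) θ = u θ.1 := rfl
    rw [hev, happly, Real.dist_eq]
    have hid : u θ.1 = ∑ t ∈ T j, u θ.1 * (ψ j t θ.1 / D j θ.1) := by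
      rw [← Finset.mul_sum, hsum1, mul_one]
    have hrw : (∑ t ∈ T j, u t * (ψ j t θ.1 / D j θ.1)) - u θ.1
        = ∑ t ∈ T j, (u t - u θ.1) * (ψ j t θ.1 / D j θ.1) := by
      conv_lhs => rw [hid]
      rw [← Finset.sum_sub_distrib]
      exact Finset.sum_congr rfl (fun t _ => by ring)
    rw [hrw]
    calc |∑ t ∈ T j, (u t - u θ.1) * (ψ j t θ.1 / D j θ.1)|
        ≤ ∑ t ∈ T j, |(u t - u θ.1) * (ψ j t θ.1 / D j θ.1)| := Finset.abs_sum_le_sum_abs _ _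
      _ ≤ ∑ t ∈ T j, (ε / 2) * (ψ j t θ.1 / D j θ.1) := by
          apply Finset.sum_le_sum
          intro t ht
          rcases eq_or_ne (ψ j t θ.1) 0 with h0 | h0
          · rw [h0, zero_div, mul_zero, abs_zero, mul_zero]
          · have hdist : dist θ.1 t < 1 / (j + 1 : ℝ) := by
              by_contra hge
              push_neg at hge
              exact h0 (max_eq_right (by linarith))
            have hut : |u t - u θ.1| ≤ ε / 2 := by
              have := hδ t (hTsub j (Finset.mem_coe.mpr ht)) θ.1 θ.2
                (by rw [dist_comm]; linarith)
              rwa [Real.dist_eq] at this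
            rw [abs_mul, abs_of_nonneg (hwnn t)]
            exact mul_le_mul_of_nonneg_right hut (hwnn t)
      _ = ε / 2 := by rw [← Finset.mul_sum, hsum1, mul_one]
  exact lt_of_le_of_lt key (by linarith)


section nrmlemmas
open Metric

lemma nrm_nonneg {k : ℕ} (x : Fin k → ℝ) : 0 ≤ nrm x := Real.sqrt_nonneg _

lemma nrm_continuous {k : ℕ} : Continuous (nrm (k := k)) :=
  Real.continuous_sqrt.comp (continuous_finset_sum _ (fun i _ => (continuous_apply i).pow 2))

lemma norm_le_nrm {k : ℕ} (x : Fin k → ℝ) : ‖x‖ ≤ nrm x := by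
  rw [pi_norm_le_iff_of_nonneg (nrm_nonneg x)]
  intro i
  rw [Real.norm_eq_abs, ← Real.sqrt_sq_eq_abs]
  apply Real.sqrt_le_sqrt
  exact Finset.single_le_sum (f := fun i => x i ^ 2) (fun j _ => sq_nonneg _) (Finset.mem_univ i)

lemma nrm_le_sqrt_mul {k : ℕ} (x : Fin k → ℝ) : nrm x ≤ Real.sqrt k * ‖x‖ := by
  have h1 : ∑ i, x i ^ 2 ≤ (k : ℝ) * ‖x‖ ^ 2 := by
    calc ∑ i, x i ^ 2 ≤ ∑ _i : Fin k, ‖x‖ ^ 2 := by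
          apply Finset.sum_le_sum
          intro i _
          have : |x i| ≤ ‖x‖ := by
            rw [← Real.norm_eq_abs]; exact norm_le_pi_norm x i
          calc x i ^ 2 = |x i| ^ 2 := (sq_abs _).symm
            _ ≤ ‖x‖ ^ 2 := by
                apply pow_le_pow_left₀ (abs_nonneg _) this
      _ = (k : ℝ) * ‖x‖ ^ 2 := by
          rw [Finset.sum_const, Finset.card_univ, Fintype.card_fin, nsmul_eq_mul]
  calc nrm x ≤ Real.sqrt ((k : ℝ) * ‖x‖ ^ 2) := Real.sqrt_le_sqrt h1
    _ = Real.sqrt k * ‖x‖ := by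
        rw [Real.sqrt_mul (Nat.cast_nonneg k), Real.sqrt_sq (norm_nonneg x)]

lemma isCompact_nrmball {k : ℕ} (M : ℝ) : IsCompact {θ : Fin k → ℝ | nrm θ ≤ M} := by
  apply IsCompact.of_isClosed_subset (isCompact_closedBall (0 : Fin k → ℝ) M)
  · exact isClosed_le nrm_continuous continuous_const
  · intro θ hθ
    rw [Metric.mem_closedBall, dist_zero_right]
    exact le_trans (norm_le_nrm θ) hθ

end nrmlemmas

/-- Uniform strong law of large numbers: for i.i.d. `(X_i)` and `h(θ, x)` a.s. continuous in `θ`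
with locally integrable sup, a.s. `θ ↦ (1/n) Σ_{i<n} h(θ, X_i)` converges locally uniformly to
the continuous function `θ ↦ E(h(θ, X_1))`. -/
theorem stmt4 {d m : ℕ}
    {Ω : Type*} [MeasurableSpace Ω] (P : Measure Ω) [IsProbabilityMeasure P]
    (X : ℕ → Ω → Fin m → ℝ)
    (hXmeas : ∀ i, Measurable (X i))
    (hXindep : iIndepFun X P)
    (hXid : ∀ i, Measure.map (X i) P = Measure.map (X 0) P)
    (h : (Fin d → ℝ) → (Fin m → ℝ) → ℝ)
    (hmeas : Measurable (Function.uncurry h))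
    (hcont : ∀ᵐ ω ∂P, Continuous fun θ => h θ (X 0 ω))
    (hint : ∀ M > (0 : ℝ),
      Integrable (fun ω => ⨆ θ : {θ : Fin d → ℝ // nrm θ ≤ M}, |h (θ : Fin d → ℝ) (X 0 ω)|) P) :
    ∀ᵐ ω ∂P,
      TendstoLocallyUniformly
        (fun (n : ℕ) (θ : Fin d → ℝ) => (1 / n : ℝ) * ∑ i ∈ Finset.range n, h θ (X i ω))
        (fun θ => ∫ ω', h θ (X 0 ω') ∂P) atTop ∧
      Continuous fun θ => ∫ ω', h θ (X 0 ω') ∂P := by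
  classical
  have hX0 : Measurable (X 0) := hXmeas 0
  set μ : Measure (Fin m → ℝ) := Measure.map (X 0) P with hμdef
  haveI : IsProbabilityMeasure μ := Measure.isProbabilityMeasure_map hX0.aemeasurable
  choose T G happrox using fun R : ℕ => interp_exists d R
  have hsec : ∀ θ : Fin d → ℝ, Measurable fun x => h θ x := fun θ =>
    hmeas.comp (measurable_const.prodMk measurable_id)
  -- the interpolants
  set Interp : (R : ℕ) → ℕ → (Fin m → ℝ) → C(Kball d R, ℝ) :=
    fun R j x => ∑ t : (T R j), h t.1 x • G R j t with hInterpdef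
  have hImeas : ∀ R j, Measurable (Interp R j) := by
    intro R j
    apply Finset.measurable_sum
    intro t _
    exact (continuous_id.smul continuous_const).measurable.comp (hsec t.1)
  -- the cleaned-up section maps
  set Φ : (R : ℕ) → (Fin m → ℝ) → C(Kball d R, ℝ) := fun R x =>
    if hx : ∃ L, Tendsto (fun j => Interp R j x) atTop (𝓝 L) then hx.choose else 0 with hΦdef
  have hΦlim : ∀ R x L, Tendsto (fun j => Interp R j x) atTop (𝓝 L) → Φ R x = L := by
    intro R x L hL
    have hex : ∃ L', Tendsto (fun j => Interp R j x) atTop (𝓝 L') := ⟨L, hL⟩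
    have h1 : Φ R x = hex.choose := by rw [hΦdef]; exact dif_pos hex
    rw [h1]
    exact tendsto_nhds_unique hex.choose_spec hL
  have hΦsect : ∀ R x, (hx : Continuous fun θ => h θ x) →
      Φ R x = ⟨fun θ : Kball d R => h θ.1 x, hx.comp continuous_subtype_val⟩ :=
    fun R x hx => hΦlim R x _ (happrox R _ hx)
  have hΦsect' : ∀ R x, (Continuous fun θ => h θ x) → ∀ θ : Kball d R, Φ R x θ = h θ.1 x := by
    intro R x hx θ
    rw [hΦsect R x hx]
    rfl
  have hΦmeas : ∀ R, Measurable (Φ R) := by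
    intro R
    set A : Set (Fin m → ℝ) := {x | CauchySeq fun j => Interp R j x} with hA
    have hAiff : ∀ x, (∃ L, Tendsto (fun j => Interp R j x) atTop (𝓝 L)) ↔ x ∈ A :=
      fun x => ⟨fun ⟨L, hL⟩ => hL.cauchySeq, fun hc => cauchySeq_tendsto_of_complete hc⟩
    have hAmeas : MeasurableSet A := by
      have hAeq : A = ⋂ (q : ℚ), ⋂ (_ : 0 < q), ⋃ N : ℕ, ⋂ n : ℕ, ⋂ (_ : N ≤ n),
          {x | dist (Interp R n x) (Interp R N x) < (q : ℝ)} := by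
        ext x
        simp only [Set.mem_iInter, Set.mem_iUnion, Set.mem_setOf_eq, hA]
        constructor
        · intro hc q hq
          rw [Metric.cauchySeq_iff'] at hc
          obtain ⟨N, hN⟩ := hc q (by exact_mod_cast hq)
          exact ⟨N, fun n hn => hN n hn⟩
        · intro hx
          rw [Metric.cauchySeq_iff']
          intro ε hε
          obtain ⟨q, hq0, hqε⟩ := exists_rat_btwn hε
          have hq0' : 0 < q := by exact_mod_cast hq0
          obtain ⟨N, hN⟩ := hx q hq0'
          exact ⟨N, fun n hn => lt_trans (hN n hn) hqε⟩
      rw [hAeq]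
      refine MeasurableSet.iInter fun q => MeasurableSet.iInter fun _ =>
        MeasurableSet.iUnion fun N => MeasurableSet.iInter fun n => MeasurableSet.iInter fun _ => ?_
      exact measurableSet_lt ((hImeas R n).dist (hImeas R N)) measurable_const
    apply measurable_of_tendsto_metrizable (f := fun j => A.piecewise (Interp R j) 0)
      (fun j => Measurable.piecewise hAmeas (hImeas R j) measurable_const)
    rw [tendsto_pi_nhds]
    intro x
    by_cases hx : x ∈ A
    · have hex := (hAiff x).mpr hx
      have hΦx : Φ R x = hex.choose := by rw [hΦdef]; exact dif_pos hex
      have : ∀ j, A.piecewise (Interp R j) 0 x = Interp R j x :=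
        fun j => Set.piecewise_eq_of_mem _ _ _ hx
      simp only [this, hΦx]
      exact hex.choose_spec
    · have hΦx : Φ R x = 0 := by
        rw [hΦdef]
        exact dif_neg (fun hex => hx ((hAiff x).mp hex))
      have : ∀ j, A.piecewise (Interp R j) 0 x = 0 :=
        fun j => Set.piecewise_eq_of_notMem _ _ _ hx
      simp only [this, hΦx]
      exact tendsto_const_nhds
  -- integrability
  have hM : ∀ R : ℕ, (0 : ℝ) < Real.sqrt d * R + 1 := by
    intro R
    have := Real.sqrt_nonneg (d : ℝ)
    positivity
  have hbound : ∀ R : ℕ, ∀ x : Fin m → ℝ, (Continuous fun θ => h θ x) →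
      ‖Φ R x‖ ≤ ⨆ θ' : {θ : Fin d → ℝ // nrm θ ≤ Real.sqrt d * R + 1}, |h (θ' : Fin d → ℝ) x| := by
    intro R x hx
    set M : ℝ := Real.sqrt d * R + 1 with hMdef
    have hnn : (0 : ℝ) ≤ ⨆ θ' : {θ : Fin d → ℝ // nrm θ ≤ M}, |h (θ' : Fin d → ℝ) x| :=
      Real.iSup_nonneg (fun θ' => abs_nonneg _)
    rw [hΦsect R x hx, ContinuousMap.norm_le _ hnn]
    intro θ
    have hrange : Set.range (fun θ' : {θ : Fin d → ℝ // nrm θ ≤ M} => |h (θ' : Fin d → ℝ) x|)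
        = (fun θ => |h θ x|) '' {θ : Fin d → ℝ | nrm θ ≤ M} := by
      ext y
      constructor
      · rintro ⟨θ', rfl⟩; exact ⟨θ'.1, θ'.2, rfl⟩
      · rintro ⟨θ0, h0, rfl⟩; exact ⟨⟨θ0, h0⟩, rfl⟩
    have hbdd : BddAbove (Set.range
        (fun θ' : {θ : Fin d → ℝ // nrm θ ≤ M} => |h (θ' : Fin d → ℝ) x|)) := by
      rw [hrange]
      exact (isCompact_nrmball M).bddAbove_image hx.abs.continuousOn
    have hmem : nrm θ.1 ≤ M := by
      have hθn : ‖θ.1‖ ≤ (R : ℝ) := mem_closedBall_zero_iff.mp θ.2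
      calc nrm θ.1 ≤ Real.sqrt d * ‖θ.1‖ := nrm_le_sqrt_mul _
        _ ≤ Real.sqrt d * R := by
            exact mul_le_mul_of_nonneg_left hθn (Real.sqrt_nonneg _)
        _ ≤ M := by rw [hMdef]; linarith
    have := le_ciSup hbdd ⟨θ.1, hmem⟩
    simpa [Real.norm_eq_abs] using this
  have hYint : ∀ R : ℕ, Integrable (fun ω => Φ R (X 0 ω)) P := by
    intro R
    refine Integrable.mono' (hint _ (hM R))
      ((hΦmeas R).comp hX0).stronglyMeasurable.aestronglyMeasurable ?_
    filter_upwards [hcont] with ω hω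
    exact hbound R (X 0 ω) hω
  -- the bad sets
  have hSnull : ∀ R : ℕ, μ (Prod.snd ''
      {p : (Kball d R) × (Fin m → ℝ) | h (p.1 : Fin d → ℝ) p.2 ≠ (Φ R p.2) p.1}) = 0 := by
    intro R
    have hf1 : Measurable fun p : (Kball d R) × (Fin m → ℝ) => h (p.1 : Fin d → ℝ) p.2 :=
      hmeas.comp ((measurable_subtype_coe.comp measurable_fst).prodMk measurable_snd)
    have hf2 : Measurable fun p : (Kball d R) × (Fin m → ℝ) => (Φ R p.2) p.1 := by
      have hpair : Measurable fun p : (Kball d R) × (Fin m → ℝ) => (Φ R p.2, p.1) :=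
        ((hΦmeas R).comp measurable_snd).prodMk measurable_fst
      exact (continuous_eval (X := Kball d R) (Y := ℝ)).measurable.comp hpair
    have hW : MeasurableSet
        {p : (Kball d R) × (Fin m → ℝ) | h (p.1 : Fin d → ℝ) p.2 ≠ (Φ R p.2) p.1} := by
      have : {p : (Kball d R) × (Fin m → ℝ) | h (p.1 : Fin d → ℝ) p.2 ≠ (Φ R p.2) p.1}
          = {p : (Kball d R) × (Fin m → ℝ) | h (p.1 : Fin d → ℝ) p.2 = (Φ R p.2) p.1}ᶜ := rfl
      rw [this]
      exact (measurableSet_eq_fun hf1 hf2).compl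
    apply analyticSet_null_of_compact_null
    · exact hW.analyticSet_image measurable_snd
    · intro F hFS hFco
      have hFm : MeasurableSet F := hFco.isClosed.measurableSet
      rw [hμdef, Measure.map_apply hX0 hFm]
      have hsub : X 0 ⁻¹' F ⊆ {ω | ¬ Continuous fun θ => h θ (X 0 ω)} := by
        intro ω hω hcω
        obtain ⟨⟨θp, xp⟩, hpW, hpx⟩ := hFS hω
        have hxp : xp = X 0 ω := hpx
        subst hxp
        exact hpW (hΦsect' R _ hcω θp).symm
      exact measure_mono_null hsub (ae_iff.mp hcont)
  set Bad : ℕ → Set (Fin m → ℝ) := fun R => toMeasurable μ (Prod.snd ''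
      {p : (Kball d R) × (Fin m → ℝ) | h (p.1 : Fin d → ℝ) p.2 ≠ (Φ R p.2) p.1}) with hBaddef
  have hBadnull : ∀ R, μ (Bad R) = 0 := by
    intro R
    rw [hBaddef, measure_toMeasurable]
    exact hSnull R
  have hagree : ∀ R (x : Fin m → ℝ), x ∉ Bad R →
      ∀ θ : Kball d R, h (θ : Fin d → ℝ) x = Φ R x θ := by
    intro R x hx θ
    by_contra hne
    exact hx (subset_toMeasurable μ _ ⟨(θ, x), hne, rfl⟩)
  have hXnotBad : ∀ R i : ℕ, ∀ᵐ ω ∂P, X i ω ∉ Bad R := by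
    intro R i
    have hpre : P (X i ⁻¹' Bad R) = 0 := by
      have h1 : P (X i ⁻¹' Bad R) = Measure.map (X i) P (Bad R) :=
        (Measure.map_apply (hXmeas i) (measurableSet_toMeasurable _ _)).symm
      rw [h1, hXid i]
      exact hBadnull R
    rw [ae_iff]
    convert hpre using 2
    ext ω
    simp
  -- SLLN per radius
  have hSLLN : ∀ R : ℕ, ∀ᵐ ω ∂P, Tendsto
      (fun n : ℕ => (n : ℝ)⁻¹ • ∑ i ∈ Finset.range n, Φ R (X i ω)) atTop
      (𝓝 (∫ ω', Φ R (X 0 ω') ∂P)) := by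
    intro R
    have hident : ∀ i, IdentDistrib (fun ω => Φ R (X i ω)) (fun ω => Φ R (X 0 ω)) P P := by
      intro i
      have hXi : IdentDistrib (X i) (X 0) P P :=
        ⟨(hXmeas i).aemeasurable, hX0.aemeasurable, hXid i⟩
      exact hXi.comp (hΦmeas R)
    have hindep : Pairwise (Function.onFun (IndepFun · · P) fun i ω => Φ R (X i ω)) :=
      fun i j hij => (hXindep.indepFun hij).comp (hΦmeas R) (hΦmeas R)
    exact strong_law_ae _ (hYint R) hindep hident
  -- identification of the limit values
  have hV : ∀ R : ℕ, ∀ θ : Kball d R,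
      (∫ ω', h (θ : Fin d → ℝ) (X 0 ω') ∂P) = (∫ ω', Φ R (X 0 ω') ∂P) θ := by
    intro R θ
    have h1 : (∫ ω', h (θ : Fin d → ℝ) (X 0 ω') ∂P) = ∫ ω', (Φ R (X 0 ω')) θ ∂P := by
      apply integral_congr_ae
      filter_upwards [hcont] with ω hω
      exact (hΦsect' R _ hω θ).symm
    rw [h1]
    have h2 := (ContinuousMap.evalCLM ℝ θ).integral_comp_comm (hYint R)
    have h3 : ∫ ω', (ContinuousMap.evalCLM ℝ θ) (Φ R (X 0 ω')) ∂P
        = ∫ ω', (Φ R (X 0 ω')) θ ∂P := rfl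
    have h4 : (ContinuousMap.evalCLM ℝ θ) (∫ ω', Φ R (X 0 ω') ∂P)
        = (∫ ω', Φ R (X 0 ω') ∂P) θ := rfl
    rw [h3, h4] at h2
    exact h2
  -- continuity of the limit function
  have hvcont : Continuous fun θ => ∫ ω', h θ (X 0 ω') ∂P := by
    rw [continuous_iff_continuousAt]
    intro θ0
    set R : ℕ := ⌈‖θ0‖⌉₊ + 1 with hRdef
    have hθ0R : ‖θ0‖ < (R : ℝ) := by
      rw [hRdef]
      push_cast
      have := Nat.le_ceil ‖θ0‖
      linarith
    set pr : (Fin d → ℝ) → (Fin d → ℝ) := fun θ i => max (-(R : ℝ)) (min R (θ i)) with hprdef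
    have hprcont : Continuous pr :=
      continuous_pi fun i => continuous_const.max (continuous_const.min (continuous_apply i))
    have hprmem : ∀ θ, pr θ ∈ Kball d R := by
      intro θ
      rw [mem_closedBall_zero_iff, pi_norm_le_iff_of_nonneg (by positivity)]
      intro i
      rw [Real.norm_eq_abs, abs_le]
      constructor
      · exact le_max_left _ _
      · exact max_le (by simp) (min_le_left _ _)
    have hprid : ∀ θ, θ ∈ Kball d R → pr θ = θ := by
      intro θ hθ
      funext i
      have hi : |θ i| ≤ (R : ℝ) := by
        rw [← Real.norm_eq_abs]
        exact le_trans (norm_le_pi_norm θ i) (mem_closedBall_zero_iff.mp hθ)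
      rw [abs_le] at hi
      show max (-(R : ℝ)) (min R (θ i)) = θ i
      rw [min_eq_right hi.2, max_eq_right hi.1]
    have hwcont : Continuous fun θ => (∫ ω', Φ R (X 0 ω') ∂P) ⟨pr θ, hprmem θ⟩ :=
      (∫ ω', Φ R (X 0 ω') ∂P).continuous.comp (hprcont.subtype_mk hprmem)
    apply ContinuousAt.congr hwcont.continuousAt
    apply Filter.eventuallyEq_of_mem
      (Metric.isOpen_ball.mem_nhds (mem_ball_zero_iff.mpr hθ0R))
    intro θ hθ
    have hθK : θ ∈ Kball d R := Metric.ball_subset_closedBall hθ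
    have h2 : (⟨pr θ, hprmem θ⟩ : Kball d R) = ⟨θ, hθK⟩ := Subtype.ext (hprid θ hθK)
    show (∫ ω', Φ R (X 0 ω') ∂P) ⟨pr θ, hprmem θ⟩ = ∫ ω', h θ (X 0 ω') ∂P
    have hVθ : (∫ ω', h θ (X 0 ω') ∂P) = (∫ ω', Φ R (X 0 ω') ∂P) ⟨θ, hθK⟩ := hV R ⟨θ, hθK⟩
    rw [h2, ← hVθ]
  -- putting everything together
  have hae1 : ∀ᵐ ω ∂P, ∀ R i : ℕ, X i ω ∉ Bad R := by
    rw [ae_all_iff]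
    intro R
    rw [ae_all_iff]
    intro i
    exact hXnotBad R i
  have hae2 : ∀ᵐ ω ∂P, ∀ R : ℕ, Tendsto
      (fun n : ℕ => (n : ℝ)⁻¹ • ∑ i ∈ Finset.range n, Φ R (X i ω)) atTop
      (𝓝 (∫ ω', Φ R (X 0 ω') ∂P)) := ae_all_iff.mpr hSLLN
  filter_upwards [hae1, hae2] with ω h1 h2
  refine ⟨?_, hvcont⟩
  rw [tendstoLocallyUniformly_iff_forall_isCompact]
  intro K' hK'
  obtain ⟨r, hr⟩ := hK'.isBounded.subset_closedBall 0
  set R : ℕ := ⌈r⌉₊ with hRdef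
  have hK'sub : K' ⊆ Kball d R :=
    hr.trans (Metric.closedBall_subset_closedBall (Nat.le_ceil r))
  rw [Metric.tendstoUniformlyOn_iff]
  intro ε hε
  have h2R := h2 R
  rw [Metric.tendsto_atTop] at h2R
  obtain ⟨N, hN⟩ := h2R ε hε
  filter_upwards [eventually_ge_atTop N] with n hn
  intro θ hθ
  have hθR : θ ∈ Kball d R := hK'sub hθ
  have hfn : (1 / n : ℝ) * ∑ i ∈ Finset.range n, h θ (X i ω)
      = ((n : ℝ)⁻¹ • ∑ i ∈ Finset.range n, Φ R (X i ω)) ⟨θ, hθR⟩ := by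
    have he1 : ((n : ℝ)⁻¹ • ∑ i ∈ Finset.range n, Φ R (X i ω)) ⟨θ, hθR⟩
        = (n : ℝ)⁻¹ * (∑ i ∈ Finset.range n, Φ R (X i ω)) ⟨θ, hθR⟩ := rfl
    have he2 : (∑ i ∈ Finset.range n, Φ R (X i ω)) (⟨θ, hθR⟩ : Kball d R)
        = ∑ i ∈ Finset.range n, (Φ R (X i ω)) ⟨θ, hθR⟩ := by
      rw [ContinuousMap.coe_sum, Finset.sum_apply]
    rw [he1, he2, one_div]
    congr 1
    apply Finset.sum_congr rfl
    intro i _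
    exact hagree R (X i ω) (h1 R i) ⟨θ, hθR⟩
  have hVθ : (∫ ω', h θ (X 0 ω') ∂P) = (∫ ω', Φ R (X 0 ω') ∂P) ⟨θ, hθR⟩ := hV R ⟨θ, hθR⟩
  rw [hfn, hVθ]
  have hstep : dist ((∫ ω', Φ R (X 0 ω') ∂P) ⟨θ, hθR⟩)
      (((n : ℝ)⁻¹ • ∑ i ∈ Finset.range n, Φ R (X i ω)) ⟨θ, hθR⟩)
      ≤ dist ((n : ℝ)⁻¹ • ∑ i ∈ Finset.range n, Φ R (X i ω)) (∫ ω', Φ R (X 0 ω') ∂P) :=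
    le_trans (ContinuousMap.dist_apply_le_dist _) (le_of_eq (dist_comm _ _))
  exact lt_of_le_of_lt hstep (hN n hn)


end
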